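/- Let p be a joint distribution of n random variables on a cycle with single marginals p_i and pairwise marginals p_ℓ for edges ℓ of the cycle, and let b_i^c, b_ℓ^c be the beliefs of the unique BP fixed point on the cycle with normalization Z_BP^c, so that the cycle entropy correction ΔS_c = S_c - Σ_i S_i + Σ_ℓ I_ℓ equals log(Z_BP^c) - Σ_i D_KL(p_i‖b_i^c) + Σ_ℓ D_KL(p_ℓ‖b_ℓ^c). Then ΔS_c ≤ log(Z̃_BP^c), where Z̃_BP^c is the normalization constant of p̃^c(x) = (1/Z̃_BP^c) Π_ℓ p_ℓ(x_ℓ) / Π_i p_i(x_i). -/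

import Mathlib

open scoped BigOperators

lemma gibbs_aux {α : Type*} [Fintype α] (p f : α → ℝ) (hp : ∀ a, 0 < p a)
    (hf : ∀ a, 0 < f a) (hsum : ∑ a, p a = 1) :
    ∑ a, p a * Real.log (f a / p a) ≤ Real.log (∑ a, f a) := by
  have huniv : (Finset.univ : Finset α).Nonempty := by
    by_contra h
    rw [Finset.not_nonempty_iff_eq_empty] at h
    rw [h] at hsum
    simp at hsum
  set Z := ∑ a, f a with hZdef
  have hZ : 0 < Z := Finset.sum_pos (fun a _ => hf a) huniv
  have key : ∀ a, p a * Real.log (f a / p a) ≤ f a / Z - p a + p a * Real.log Z := by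
    intro a
    have h0 : p a ≠ 0 := (hp a).ne'
    have hZ0 : Z ≠ 0 := hZ.ne'
    have h1 : Real.log (f a / p a) = Real.log (f a / (p a * Z)) + Real.log Z := by
      rw [← Real.log_mul (ne_of_gt (div_pos (hf a) (mul_pos (hp a) hZ))) hZ0]
      congr 1
      field_simp
    have h2 : Real.log (f a / (p a * Z)) ≤ f a / (p a * Z) - 1 :=
      Real.log_le_sub_one_of_pos (div_pos (hf a) (mul_pos (hp a) hZ))
    have h3 := mul_le_mul_of_nonneg_left h2 (hp a).le
    have hpa := hp a
    calc p a * Real.log (f a / p a)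
        = p a * Real.log (f a / (p a * Z)) + p a * Real.log Z := by rw [h1]; ring
      _ ≤ p a * (f a / (p a * Z) - 1) + p a * Real.log Z := by linarith
      _ = f a / Z - p a + p a * Real.log Z := by field_simp
  calc ∑ a, p a * Real.log (f a / p a)
      ≤ ∑ a, (f a / Z - p a + p a * Real.log Z) := Finset.sum_le_sum (fun a _ => key a)
    _ = (∑ a, f a) / Z - ∑ a, p a + (∑ a, p a) * Real.log Z := by
        rw [Finset.sum_add_distrib, Finset.sum_sub_distrib, ← Finset.sum_div, ← Finset.sum_mul]
    _ = Real.log Z := by rw [hsum, ← hZdef]; field_simp; ring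

theorem stmt_11 (n q : ℕ) [NeZero n] (hq : 0 < q)
    (p : (Fin n → Fin q) → ℝ) (hp : ∀ s, 0 < p s) (hsum : ∑ s, p s = 1) :
    let pi : Fin n → Fin q → ℝ := fun i x => ∑ s, if s i = x then p s else 0
    let pl : Fin n → Fin q → Fin q → ℝ :=
      fun i x y => ∑ s, if s i = x ∧ s (i + 1) = y then p s else 0
    let S : ℝ := -∑ s, p s * Real.log (p s)
    let Si : Fin n → ℝ := fun i => -∑ x, pi i x * Real.log (pi i x)
    let Il : Fin n → ℝ :=
      fun i => ∑ x, ∑ y, pl i x y * Real.log (pl i x y / (pi i x * pi (i + 1) y))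
    let ΔS : ℝ := S - ∑ i, Si i + ∑ i, Il i
    let Ztilde : ℝ :=
      ∑ s : Fin n → Fin q, (∏ i, pl i (s i) (s (i + 1))) / ∏ i, pi i (s i)
    ΔS ≤ Real.log Ztilde := by
  intro pi pl S Si Il ΔS Ztilde
  have hq' : Nonempty (Fin q) := ⟨⟨0, hq⟩⟩
  -- nonnegativity / positivity
  have hpl_nonneg : ∀ i x y, 0 ≤ pl i x y := by
    intro i x y
    refine Finset.sum_nonneg fun s _ => ?_
    split_ifs with h
    · exact (hp s).le
    · exact le_rfl
  have hpi_pos : ∀ i x, 0 < pi i x := by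
    intro i x
    refine Finset.sum_pos' (fun s _ => ?_) ⟨fun _ => x, Finset.mem_univ _, by simp [hp]⟩
    split_ifs with h
    · exact (hp s).le
    · exact le_rfl
  have hpl_pos : ∀ (i : Fin n) (s : Fin n → Fin q), 0 < pl i (s i) (s (i + 1)) := by
    intro i s
    refine Finset.sum_pos' (fun t _ => ?_) ⟨s, Finset.mem_univ _, by simp [hp]⟩
    split_ifs with h
    · exact (hp t).le
    · exact le_rfl
  -- marginalization lemmas
  have hmarg1 : ∀ i x, ∑ y, pl i x y = pi i x := by
    intro i x
    show ∑ y, ∑ s, _ = ∑ s, _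
    rw [Finset.sum_comm]
    refine Finset.sum_congr rfl fun s _ => ?_
    by_cases h : s i = x <;> simp [h, ite_and, Finset.sum_ite_eq]
  have hmarg2 : ∀ i y, ∑ x, pl i x y = pi (i + 1) y := by
    intro i y
    show ∑ x, ∑ s, _ = ∑ s, _
    rw [Finset.sum_comm]
    refine Finset.sum_congr rfl fun s _ => ?_
    by_cases h : s (i + 1) = y <;> simp [h, ite_and, Finset.sum_ite_eq]
  -- pushforward lemmas
  have hpush1 : ∀ (i : Fin n) (g : Fin q → ℝ),
      ∑ s, p s * g (s i) = ∑ x, pi i x * g x := by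
    intro i g
    show _ = ∑ x, (∑ s, _) * g x
    simp_rw [Finset.sum_mul, ite_mul, zero_mul]
    rw [Finset.sum_comm]
    simp [Finset.sum_ite_eq]
  have hpush2 : ∀ (i : Fin n) (g : Fin q → Fin q → ℝ),
      ∑ s, p s * g (s i) (s (i + 1)) = ∑ x, ∑ y, pl i x y * g x y := by
    intro i g
    show _ = ∑ x, ∑ y, (∑ s, if s i = x ∧ s (i + 1) = y then p s else 0) * g x y
    simp_rw [Finset.sum_mul, ite_mul, zero_mul]
    refine Eq.symm ?_
    calc ∑ x : Fin q, ∑ y : Fin q, ∑ s : Fin n → Fin q,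
          (if s i = x ∧ s (i + 1) = y then p s * g x y else 0)
        = ∑ x : Fin q, ∑ s : Fin n → Fin q, ∑ y : Fin q,
          (if s i = x ∧ s (i + 1) = y then p s * g x y else 0) :=
          Finset.sum_congr rfl fun x _ => Finset.sum_comm
      _ = ∑ s : Fin n → Fin q, ∑ x : Fin q, ∑ y : Fin q,
          (if s i = x ∧ s (i + 1) = y then p s * g x y else 0) := Finset.sum_comm
      _ = ∑ s, p s * g (s i) (s (i + 1)) := Finset.sum_congr rfl fun s _ => by
          simp [ite_and, Finset.sum_ite_eq]
  -- abbreviations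
  set A : Fin n → ℝ := fun i => ∑ x, ∑ y, pl i x y * Real.log (pl i x y) with hA
  set B : Fin n → ℝ := fun i => ∑ x, pi i x * Real.log (pi i x) with hB
  -- mutual information identity
  have hIl : ∀ i, Il i = A i - B i - B (i + 1) := by
    intro i
    have h1 : ∀ x y, pl i x y * Real.log (pl i x y / (pi i x * pi (i + 1) y))
        = pl i x y * Real.log (pl i x y) - pl i x y * Real.log (pi i x)
          - pl i x y * Real.log (pi (i + 1) y) := by
      intro x y
      rcases eq_or_lt_of_le (hpl_nonneg i x y) with h | h
      · simp [← h]
      · rw [Real.log_div (ne_of_gt h) (ne_of_gt (mul_pos (hpi_pos i x) (hpi_pos (i + 1) y))),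
          Real.log_mul (ne_of_gt (hpi_pos i x)) (ne_of_gt (hpi_pos (i + 1) y))]
        ring
    show (∑ x, ∑ y, _) = _
    simp_rw [h1, Finset.sum_sub_distrib]
    congr 1
    · congr 1
      refine Finset.sum_congr rfl fun x _ => ?_
      rw [← Finset.sum_mul, hmarg1]
    · rw [Finset.sum_comm]
      refine Finset.sum_congr rfl fun y _ => ?_
      rw [← Finset.sum_mul, hmarg2]
  -- shift of index sum
  have hshift : ∑ i, B (i + 1) = ∑ i, B i := Equiv.sum_comp (Equiv.addRight (1 : Fin n)) B
  -- the tilde distribution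
  set F : (Fin n → Fin q) → ℝ :=
    fun s => (∏ i, pl i (s i) (s (i + 1))) / ∏ i, pi i (s i) with hF
  have hFpos : ∀ s, 0 < F s := fun s =>
    div_pos (Finset.prod_pos fun i _ => hpl_pos i s) (Finset.prod_pos fun i _ => hpi_pos i (s i))
  have hlogF : ∀ s, Real.log (F s)
      = (∑ i, Real.log (pl i (s i) (s (i + 1)))) - ∑ i, Real.log (pi i (s i)) := by
    intro s
    rw [hF]
    rw [Real.log_div (ne_of_gt (Finset.prod_pos fun i _ => hpl_pos i s))
      (ne_of_gt (Finset.prod_pos fun i _ => hpi_pos i (s i))),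
      Real.log_prod (fun i _ => (hpl_pos i s).ne'),
      Real.log_prod (fun i _ => (hpi_pos i (s i)).ne')]
  -- key identity
  have hkey : ΔS = ∑ s, p s * Real.log (F s / p s) := by
    have expand : ∀ s, p s * Real.log (F s / p s)
        = (∑ i, p s * Real.log (pl i (s i) (s (i + 1))))
          - (∑ i, p s * Real.log (pi i (s i))) - p s * Real.log (p s) := by
      intro s
      rw [Real.log_div (hFpos s).ne' (hp s).ne', hlogF s, mul_sub, mul_sub,
        Finset.mul_sum, Finset.mul_sum]
    have e1 : ∀ i, ∑ s, p s * Real.log (pl i (s i) (s (i + 1))) = A i := fun i =>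
      hpush2 i fun x y => Real.log (pl i x y)
    have e2 : ∀ i, ∑ s, p s * Real.log (pi i (s i)) = B i := fun i =>
      hpush1 i fun x => Real.log (pi i x)
    have hRHS : ∑ s, p s * Real.log (F s / p s)
        = (∑ i, A i) - (∑ i, B i) - ∑ s, p s * Real.log (p s) := by
      rw [Finset.sum_congr rfl fun s _ => expand s, Finset.sum_sub_distrib,
        Finset.sum_sub_distrib]
      congr 1
      congr 1
      · rw [Finset.sum_comm]
        exact Finset.sum_congr rfl fun i _ => e1 i
      · rw [Finset.sum_comm]
        exact Finset.sum_congr rfl fun i _ => e2 i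
    have hLHS : ΔS = (∑ i, A i) - (∑ i, B i) - ∑ s, p s * Real.log (p s) := by
      have h0 : ΔS = (-∑ s, p s * Real.log (p s)) - (∑ i, -B i) + ∑ i, Il i := rfl
      rw [h0, Finset.sum_congr rfl fun i _ => hIl i, Finset.sum_sub_distrib,
        Finset.sum_sub_distrib, hshift, Finset.sum_neg_distrib]
      ring
    rw [hLHS, hRHS]
  rw [hkey]
  exact gibbs_aux p F hp hFpos hsum
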